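/- There exists an absolute constant C > 0 such that for every real z ≥ 1, Σ_{z < m < 2z} |b(m)|/m ≤ C · z^{−3/4} · 2^{ω(d)}. -/

import Mathlib

noncomputable def fw (m : ℕ) : ℝ := 4 ^ m.primeFactors.card * (m : ℝ) ^ (-(1:ℝ)/4)

noncomputable def cw (p : ℕ) : ℝ :=
  1 + 4 * ((p:ℝ) ^ (-(1:ℝ)/4)) / (1 - (p:ℝ) ^ (-(1:ℝ)/4))

lemma fw_nonneg (m : ℕ) : 0 ≤ fw m := by
  unfold fw; positivity

lemma x_pos {p : ℕ} (hp : p.Prime) : 0 < (p:ℝ) ^ (-(1:ℝ)/4) := by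
  apply Real.rpow_pos_of_pos
  exact_mod_cast hp.pos

lemma x_lt_one {p : ℕ} (hp : p.Prime) : (p:ℝ) ^ (-(1:ℝ)/4) < 1 := by
  apply Real.rpow_lt_one_of_one_lt_of_neg
  · exact_mod_cast hp.one_lt
  · norm_num

lemma fw_one : fw 1 = 1 := by simp [fw]

lemma fw_mul {a b : ℕ} (ha : 0 < a) (hb : 0 < b) (h : a.Coprime b) :
    fw (a * b) = fw a * fw b := by
  unfold fw
  rw [Nat.Coprime.primeFactors_mul h,
    Finset.card_union_of_disjoint (Nat.Coprime.disjoint_primeFactors h)]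
  push_cast
  rw [Real.mul_rpow (by positivity) (by positivity), pow_add]
  ring

lemma fw_prime_pow {p : ℕ} (hp : p.Prime) (e : ℕ) (he : e ≠ 0) :
    fw (p ^ e) = 4 * ((p:ℝ) ^ (-(1:ℝ)/4)) ^ e := by
  unfold fw
  rw [Nat.primeFactors_prime_pow he hp, Finset.card_singleton, pow_one]
  push_cast
  rw [← Real.rpow_natCast (p:ℝ) e, ← Real.rpow_mul (by positivity),
    mul_comm (e:ℝ), Real.rpow_mul_natCast (by positivity)]

lemma geom_bound {x : ℝ} (h0 : 0 ≤ x) (h1 : x < 1) (n : ℕ) :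
    ∑ e ∈ Finset.range n, x ^ e ≤ (1 - x)⁻¹ := by
  rw [inv_eq_one_div, le_div_iff₀ (by linarith)]
  have hg := geom_sum_mul x n
  nlinarith [pow_nonneg h0 n]

lemma cw_nonneg {p : ℕ} (hp : p.Prime) : 1 ≤ cw p := by
  have h0 := x_pos hp
  have h1 := x_lt_one hp
  unfold cw
  have : 0 ≤ 4 * ((p:ℝ) ^ (-(1:ℝ)/4)) / (1 - (p:ℝ) ^ (-(1:ℝ)/4)) :=
    div_nonneg (by positivity) (by linarith)
  linarith

lemma sum_fw_prime_pow {p : ℕ} (hp : p.Prime) (n : ℕ) :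
    ∑ e ∈ Finset.range n, fw (p ^ e) ≤ cw p := by
  set x : ℝ := (p:ℝ) ^ (-(1:ℝ)/4) with hx
  have h0 := x_pos hp
  have h1 := x_lt_one hp
  match n with
  | 0 => simpa using (by linarith [cw_nonneg hp] : (0:ℝ) ≤ cw p)
  | (k+1) =>
    rw [Finset.sum_range_succ']
    have h2 : ∀ e ∈ Finset.range k, fw (p ^ (e + 1)) = 4 * x * x ^ e := by
      intro e _
      rw [fw_prime_pow hp (e+1) (Nat.succ_ne_zero e), pow_succ]
      ring
    rw [Finset.sum_congr rfl h2, pow_zero, fw_one, ← Finset.mul_sum]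
    have h3 : ∑ e ∈ Finset.range k, x ^ e ≤ (1 - x)⁻¹ := geom_bound h0.le h1 k
    have h4 : 4 * x * ∑ e ∈ Finset.range k, x ^ e ≤ 4 * x * (1 - x)⁻¹ := by
      apply mul_le_mul_of_nonneg_left h3 (by positivity)
    unfold cw
    rw [← hx, div_eq_mul_inv]
    linarith

lemma my_sum_image_le {α β : Type*} [DecidableEq β] (s : Finset α) (g : α → β)
    (f : β → ℝ) (hf : ∀ b, 0 ≤ f b) :
    ∑ x ∈ s.image g, f x ≤ ∑ a ∈ s, f (g a) := by
  classical
  induction s using Finset.induction with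
  | empty => simp
  | @insert a s ha ih =>
    rw [Finset.image_insert, Finset.sum_insert ha]
    by_cases hg : g a ∈ s.image g
    · rw [Finset.insert_eq_self.2 hg]
      linarith [hf (g a)]
    · rw [Finset.sum_insert hg]
      linarith

lemma L1 (N : ℕ) (P : Finset ℕ) (hP : ∀ p ∈ P, p.Prime) :
    ∑ m ∈ (Finset.range (N+1)).filter
        (fun m => 0 < m ∧ m.primeFactors ⊆ P), fw m ≤ ∏ p ∈ P, cw p := by
  classical
  induction P using Finset.induction with
  | empty =>
    have hsub : (Finset.range (N+1)).filter
        (fun m => 0 < m ∧ m.primeFactors ⊆ (∅ : Finset ℕ)) ⊆ {1} := by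
      intro m hm
      simp only [Finset.mem_filter, Finset.subset_empty] at hm
      have := (Nat.primeFactors_eq_empty).1 hm.2.2
      rcases this with h | h
      · omega
      · simp [h]
    calc ∑ m ∈ (Finset.range (N+1)).filter
          (fun m => 0 < m ∧ m.primeFactors ⊆ (∅ : Finset ℕ)), fw m
        ≤ ∑ m ∈ ({1} : Finset ℕ), fw m :=
          Finset.sum_le_sum_of_subset_of_nonneg hsub (fun m _ _ => fw_nonneg m)
      _ = 1 := by simp [fw_one]
      _ = ∏ p ∈ (∅ : Finset ℕ), cw p := by simp
  | @insert a Q ha ih =>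
    have hpa : a.Prime := hP a (Finset.mem_insert_self a Q)
    have hQ : ∀ p ∈ Q, p.Prime := fun p hp => hP p (Finset.mem_insert_of_mem hp)
    set T' := (Finset.range (N+1)).filter
        (fun m => 0 < m ∧ m.primeFactors ⊆ Q) with hT'
    have hsub : (Finset.range (N+1)).filter
        (fun m => 0 < m ∧ m.primeFactors ⊆ insert a Q) ⊆
        (Finset.range (N+1) ×ˢ T').image (fun q : ℕ × ℕ => a ^ q.1 * q.2) := by
      intro m hm
      simp only [Finset.mem_filter, Finset.mem_range] at hm
      obtain ⟨hmN, hm0, hmP⟩ := hm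
      have hm0' : m ≠ 0 := hm0.ne'
      refine Finset.mem_image.2 ⟨(m.factorization a, ordCompl[a] m), ?_, ?_⟩
      · refine Finset.mem_product.2 ⟨?_, ?_⟩
        · refine Finset.mem_range.2 ?_
          have h1 : a ^ m.factorization a ≤ m :=
            Nat.le_of_dvd hm0 (Nat.ordProj_dvd m a)
          have h2 : m.factorization a < 2 ^ m.factorization a :=
            Nat.lt_two_pow_self
          have h3 : 2 ^ m.factorization a ≤ a ^ m.factorization a :=
            Nat.pow_le_pow_left hpa.two_le _
          omega
        · refine Finset.mem_filter.2 ⟨Finset.mem_range.2 ?_, Nat.ordCompl_pos a hm0', ?_⟩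
          · exact lt_of_le_of_lt (Nat.ordCompl_le m a) (by omega)
          · intro q hq
            have hq1 : q ∈ m.primeFactors :=
              Nat.primeFactors_mono (Nat.ordCompl_dvd m a) hm0' hq
            have hq2 : q ≠ a := by
              rintro rfl
              exact Nat.not_dvd_ordCompl hpa hm0' (Nat.dvd_of_mem_primeFactors hq)
            have := hmP hq1
            rcases Finset.mem_insert.1 this with h | h
            · exact absurd h hq2
            · exact h
      · exact Nat.ordProj_mul_ordCompl_eq_self m a
    calc ∑ m ∈ (Finset.range (N+1)).filter
          (fun m => 0 < m ∧ m.primeFactors ⊆ insert a Q), fw m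
        ≤ ∑ m ∈ (Finset.range (N+1) ×ˢ T').image
            (fun q : ℕ × ℕ => a ^ q.1 * q.2), fw m :=
          Finset.sum_le_sum_of_subset_of_nonneg hsub (fun m _ _ => fw_nonneg m)
      _ ≤ ∑ q ∈ Finset.range (N+1) ×ˢ T', fw (a ^ q.1 * q.2) :=
          my_sum_image_le _ _ _ fw_nonneg
      _ = ∑ q ∈ Finset.range (N+1) ×ˢ T', fw (a ^ q.1) * fw q.2 := by
          apply Finset.sum_congr rfl
          rintro ⟨e, m'⟩ hq
          simp only [Finset.mem_product, hT', Finset.mem_filter] at hq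
          obtain ⟨-, -, hm'0, hm'Q⟩ := hq
          have hcop : (a ^ e).Coprime m' := by
            apply Nat.Coprime.pow_left
            rw [hpa.coprime_iff_not_dvd]
            intro hdvd
            exact ha (hm'Q (Nat.mem_primeFactors.2 ⟨hpa, hdvd, hm'0.ne'⟩))
          exact fw_mul (pow_pos hpa.pos e) hm'0 hcop
      _ = (∑ e ∈ Finset.range (N+1), fw (a ^ e)) * ∑ m' ∈ T', fw m' := by
          rw [Finset.sum_mul_sum, Finset.sum_product]
      _ ≤ cw a * ∏ p ∈ Q, cw p := by
          apply mul_le_mul (sum_fw_prime_pow hpa _) (ih hQ)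
            (Finset.sum_nonneg fun m _ => fw_nonneg m)
            (by linarith [cw_nonneg hpa])
      _ = ∏ p ∈ insert a Q, cw p := (Finset.prod_insert ha).symm

lemma x_pow_four {p : ℕ} (hp : p.Prime) :
    ((p:ℝ) ^ (-(1:ℝ)/4)) ^ (4:ℕ) = (p:ℝ)⁻¹ := by
  rw [← Real.rpow_mul_natCast (by positivity)]
  norm_num
  exact Real.rpow_neg_one _

lemma cw_le_24 {p : ℕ} (hp : p.Prime) : cw p ≤ 24 := by
  set x : ℝ := (p:ℝ) ^ (-(1:ℝ)/4) with hx
  have h0 := x_pos hp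
  have h1 := x_lt_one hp
  have hx4 : x ^ (4:ℕ) = (p:ℝ)⁻¹ := x_pow_four hp
  have hp2 : (2:ℝ) ≤ (p:ℝ) := by exact_mod_cast hp.two_le
  have hxle : x ≤ 17/20 := by
    have : x ^ (4:ℕ) ≤ (17/20:ℝ) ^ (4:ℕ) := by
      rw [hx4]
      rw [inv_le_comm₀ (by linarith) (by norm_num)]
      · norm_num; linarith
    exact le_of_pow_le_pow_left₀ (by norm_num) (by norm_num) this
  have hden : (3:ℝ)/20 ≤ 1 - x := by linarith
  have : 4 * x / (1 - x) ≤ 23 := by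
    rw [div_le_iff₀ (by linarith)]
    nlinarith
  unfold cw
  rw [← hx]
  linarith

lemma cw_le_2 {p : ℕ} (hp : p.Prime) (hp625 : 625 ≤ p) : cw p ≤ 2 := by
  set x : ℝ := (p:ℝ) ^ (-(1:ℝ)/4) with hx
  have h0 := x_pos hp
  have h1 := x_lt_one hp
  have hx4 : x ^ (4:ℕ) = (p:ℝ)⁻¹ := x_pow_four hp
  have hp2 : (625:ℝ) ≤ (p:ℝ) := by exact_mod_cast hp625
  have hxle : x ≤ 1/5 := by
    have : x ^ (4:ℕ) ≤ (1/5:ℝ) ^ (4:ℕ) := by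
      rw [hx4, inv_le_comm₀ (by linarith) (by norm_num)]
      norm_num; linarith
    exact le_of_pow_le_pow_left₀ (by norm_num) (by norm_num) this
  have : 4 * x / (1 - x) ≤ 1 := by
    rw [div_le_iff₀ (by linarith)]
    linarith
  unfold cw
  rw [← hx]
  linarith

lemma prod_cw_le (P : Finset ℕ) (hP : ∀ p ∈ P, p.Prime) :
    ∏ p ∈ P, cw p ≤ 24 ^ 625 * 2 ^ P.card := by
  classical
  have hsplit := Finset.prod_filter_mul_prod_filter_not P (fun p => p < 625) cw
  have h1 : ∏ p ∈ P.filter (fun p => p < 625), cw p ≤ 24 ^ 625 := by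
    calc ∏ p ∈ P.filter (fun p => p < 625), cw p
        ≤ ∏ _p ∈ P.filter (fun p => p < 625), (24:ℝ) := by
          apply Finset.prod_le_prod
          · intro p hp
            linarith [cw_nonneg (hP p (Finset.mem_filter.1 hp).1)]
          · intro p hp
            exact cw_le_24 (hP p (Finset.mem_filter.1 hp).1)
      _ = 24 ^ (P.filter (fun p => p < 625)).card := by rw [Finset.prod_const]
      _ ≤ 24 ^ 625 := by
          apply pow_le_pow_right₀ (by norm_num)
          calc (P.filter (fun p => p < 625)).card
              ≤ (Finset.range 625).card := by
                apply Finset.card_le_card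
                intro p hp
                exact Finset.mem_range.2 (Finset.mem_filter.1 hp).2
            _ = 625 := Finset.card_range 625
  have h2 : ∏ p ∈ P.filter (fun p => ¬ p < 625), cw p ≤ 2 ^ P.card := by
    calc ∏ p ∈ P.filter (fun p => ¬ p < 625), cw p
        ≤ ∏ _p ∈ P.filter (fun p => ¬ p < 625), (2:ℝ) := by
          apply Finset.prod_le_prod
          · intro p hp
            linarith [cw_nonneg (hP p (Finset.mem_filter.1 hp).1)]
          · intro p hp
            exact cw_le_2 (hP p (Finset.mem_filter.1 hp).1)
              (by have := (Finset.mem_filter.1 hp).2; omega)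
      _ = 2 ^ (P.filter (fun p => ¬ p < 625)).card := by rw [Finset.prod_const]
      _ ≤ 2 ^ P.card := by
          apply pow_le_pow_right₀ (by norm_num)
          exact Finset.card_le_card (Finset.filter_subset _ _)
  have hpos1 : (0:ℝ) ≤ ∏ p ∈ P.filter (fun p => p < 625), cw p :=
    Finset.prod_nonneg fun p hp => by
      linarith [cw_nonneg (hP p (Finset.mem_filter.1 hp).1)]
  have hpos2 : (0:ℝ) ≤ ∏ p ∈ P.filter (fun p => ¬ p < 625), cw p :=
    Finset.prod_nonneg fun p hp => by
      linarith [cw_nonneg (hP p (Finset.mem_filter.1 hp).1)]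
  calc ∏ p ∈ P, cw p
      = (∏ p ∈ P.filter (fun p => p < 625), cw p) *
        ∏ p ∈ P.filter (fun p => ¬ p < 625), cw p := hsplit.symm
    _ ≤ 24 ^ 625 * 2 ^ P.card := by
        apply mul_le_mul h1 h2 hpos2 (by positivity)



open scoped Classical in
/-- There is an absolute constant `C > 0` such that, whenever `d ≥ 1` and `b`
vanishes at integers having a prime factor not dividing `d` and satisfies
`|b n| ≤ 4^{ω(n)}`, one has for every real `z ≥ 1`:
`Σ_{z < m < 2z} |b m|/m ≤ C * z^{-3/4} * 2^{ω(d)}`. -/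
theorem stmt_8 :
    ∃ C : ℝ, 0 < C ∧
      ∀ (d : ℕ), 0 < d → ∀ (b : ℕ → ℝ),
        (∀ n : ℕ, 1 ≤ n → (∃ q : ℕ, q.Prime ∧ q ∣ n ∧ ¬ q ∣ d) → b n = 0) →
        (∀ n : ℕ, 1 ≤ n → |b n| ≤ 4 ^ n.primeFactors.card) →
        ∀ z : ℝ, 1 ≤ z →
          ∑ m ∈ (Finset.range (⌈2 * z⌉₊ + 1)).filter
              (fun m : ℕ => z < (m : ℝ) ∧ (m : ℝ) < 2 * z),
              |b m| / (Nat.cast m : ℝ) ≤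
            C * z ^ (-(3 : ℝ) / 4) * 2 ^ d.primeFactors.card := by
  refine ⟨24 ^ 625, by positivity, ?_⟩
  intro d hd b hb0 hb4 z hz
  have hz0 : (0:ℝ) < z := lt_of_lt_of_le one_pos hz
  have hzr : (0:ℝ) ≤ z ^ (-(3:ℝ)/4) := Real.rpow_nonneg hz0.le _
  set N := ⌈2 * z⌉₊ with hN
  set P := d.primeFactors with hPdef
  have hP : ∀ p ∈ P, p.Prime := fun p hp => Nat.prime_of_mem_primeFactors hp
  set S := (Finset.range (N + 1)).filter
      (fun m : ℕ => z < (m : ℝ) ∧ (m : ℝ) < 2 * z) with hS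
  have step1 : ∑ m ∈ S, |b m| / (m : ℝ) ≤
      ∑ m ∈ S, (if m.primeFactors ⊆ P then z ^ (-(3:ℝ)/4) * fw m else 0) := by
    apply Finset.sum_le_sum
    intro m hm
    rw [hS, Finset.mem_filter] at hm
    obtain ⟨-, hzm, -⟩ := hm
    have hm1 : 1 ≤ m := by
      by_contra h
      push_neg at h
      interval_cases m
      · simp at hzm; linarith
    have hmpos : (0:ℝ) < (m:ℝ) := by exact_mod_cast hm1
    by_cases hsub : m.primeFactors ⊆ P
    · rw [if_pos hsub]
      have hb : |b m| ≤ 4 ^ m.primeFactors.card := hb4 m hm1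
      have hminv : (m:ℝ)⁻¹ ≤ z ^ (-(3:ℝ)/4) * (m:ℝ) ^ (-(1:ℝ)/4) := by
        have e1 : (m:ℝ)⁻¹ = (m:ℝ) ^ (-(3:ℝ)/4) * (m:ℝ) ^ (-(1:ℝ)/4) := by
          rw [← Real.rpow_add hmpos]
          norm_num
          exact (Real.rpow_neg_one _).symm
        rw [e1]
        exact mul_le_mul_of_nonneg_right
          (Real.rpow_le_rpow_of_nonpos hz0 hzm.le (by norm_num))
          (Real.rpow_nonneg hmpos.le _)
      calc |b m| / (m:ℝ) = |b m| * (m:ℝ)⁻¹ := div_eq_mul_inv _ _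
        _ ≤ 4 ^ m.primeFactors.card * (z ^ (-(3:ℝ)/4) * (m:ℝ) ^ (-(1:ℝ)/4)) := by
            apply mul_le_mul hb hminv (inv_nonneg.2 hmpos.le) (by positivity)
        _ = z ^ (-(3:ℝ)/4) * fw m := by unfold fw; ring
    · rw [if_neg hsub]
      obtain ⟨q, hq, hqP⟩ := Finset.not_subset.1 hsub
      have hbz : b m = 0 := by
        apply hb0 m hm1
        refine ⟨q, Nat.prime_of_mem_primeFactors hq, Nat.dvd_of_mem_primeFactors hq, ?_⟩
        intro hqd
        exact hqP (Nat.mem_primeFactors.2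
          ⟨Nat.prime_of_mem_primeFactors hq, hqd, hd.ne'⟩)
      simp [hbz]
  have step2 : ∑ m ∈ S, (if m.primeFactors ⊆ P then z ^ (-(3:ℝ)/4) * fw m else 0)
      = ∑ m ∈ S.filter (fun m => m.primeFactors ⊆ P), z ^ (-(3:ℝ)/4) * fw m :=
    (Finset.sum_filter _ _).symm
  have hsub2 : S.filter (fun m => m.primeFactors ⊆ P) ⊆
      (Finset.range (N + 1)).filter (fun m => 0 < m ∧ m.primeFactors ⊆ P) := by
    intro m hm
    simp only [hS, Finset.mem_filter] at hm ⊢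
    obtain ⟨⟨hrange, hzm, -⟩, hsubm⟩ := hm
    refine ⟨hrange, ?_, hsubm⟩
    by_contra h
    push_neg at h
    interval_cases m
    simp at hzm; linarith
  have step3 : ∑ m ∈ S.filter (fun m => m.primeFactors ⊆ P),
        z ^ (-(3:ℝ)/4) * fw m ≤
      ∑ m ∈ (Finset.range (N + 1)).filter (fun m => 0 < m ∧ m.primeFactors ⊆ P),
        z ^ (-(3:ℝ)/4) * fw m :=
    Finset.sum_le_sum_of_subset_of_nonneg hsub2
      (fun m _ _ => mul_nonneg hzr (fw_nonneg m))
  have step4 : ∑ m ∈ (Finset.range (N + 1)).filter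
        (fun m => 0 < m ∧ m.primeFactors ⊆ P), z ^ (-(3:ℝ)/4) * fw m ≤
      z ^ (-(3:ℝ)/4) * (24 ^ 625 * 2 ^ P.card) := by
    rw [← Finset.mul_sum]
    apply mul_le_mul_of_nonneg_left _ hzr
    exact le_trans (L1 N P hP) (prod_cw_le P hP)
  calc ∑ m ∈ S, |b m| / (m : ℝ)
      ≤ z ^ (-(3:ℝ)/4) * (24 ^ 625 * 2 ^ P.card) := by
        rw [step2] at step1
        linarith
    _ = 24 ^ 625 * z ^ (-(3:ℝ)/4) * 2 ^ P.card := by ring
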